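/- A nontrivial commutative ring $A$ is an integral domain if and only if $A$ itself is the only nonzero ideal of $A$ that is also a factroid of $A$ (i.e., a $\mathrm{reg}(A)$-factroid). -/

import Mathlib

/-- A nontrivial commutative ring `A` is an integral domain iff `A` is the only
nonzero ideal of `A` that is a factroid of `A` (absorbs division by
nonzerodivisors). -/
theorem stmt_11 {A : Type*} [CommRing A] [Nontrivial A] :
    IsDomain A ↔
      ∀ I : Ideal A, I ≠ ⊥ →
        (∀ b ∈ nonZeroDivisors A, ∀ a : A, b * a ∈ I → a ∈ I) → I = ⊤ := by
  constructor
  · intro hdom I hI hfac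
    obtain ⟨x, hxI, hx0⟩ := Submodule.exists_mem_ne_zero_of_ne_bot hI
    have hxreg : x ∈ nonZeroDivisors A := mem_nonZeroDivisors_of_ne_zero hx0
    have : (1 : A) ∈ I := hfac x hxreg 1 (by simpa using hxI)
    exact Ideal.eq_top_of_isUnit_mem I this isUnit_one
  · intro h
    refine (isDomain_iff_noZeroDivisors_and_nontrivial A).mpr ⟨⟨?_⟩, ‹_›⟩
    intro x y hxy
    by_contra hc
    push_neg at hc
    obtain ⟨hx, hy⟩ := hc
    set I : Ideal A := Ideal.torsionOf A A x with hI
    have hyI : y ∈ I := by rw [hI, Ideal.mem_torsionOf_iff, smul_eq_mul, mul_comm]; exact hxy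
    have hIne : I ≠ ⊥ := fun hb => hy (by simpa [hb] using hyI)
    have hfac : ∀ b ∈ nonZeroDivisors A, ∀ a : A, b * a ∈ I → a ∈ I := by
      intro b hb a ha
      rw [hI, Ideal.mem_torsionOf_iff, smul_eq_mul] at ha ⊢
      refine (mem_nonZeroDivisors_iff.mp hb).2 _ ?_
      rw [← ha]; ring
    have := h I hIne hfac
    have h1 : (1 : A) ∈ I := this ▸ Submodule.mem_top
    rw [hI, Ideal.mem_torsionOf_iff, one_smul] at h1
    exact hx h1
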